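/- For every integer k ≥ 2, every integer m ≥ 1, and every norm ‖·‖ on ℝ^m, if (X, d) is a coboundary k-metric in m dimensions with respect to ‖·‖ (i.e., (X, d) ∈ C_{k,‖·‖}^m), then (X, d) is a strong pseudo k-metric space. -/

import Mathlib

open scoped BigOperators

/-- An alternating real-valued function on `j`-tuples of `X`
(a `(j-1)`-dimensional chain on the complete complex on `X`). -/
def AltChain {X : Type*} {j : ℕ} (α : (Fin j → X) → ℝ) : Prop :=
  ∀ (π : Equiv.Perm (Fin j)) (x : Fin j → X),
    α (x ∘ π) = ((Equiv.Perm.sign π : ℤ) : ℝ) * α x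

/-- The boundary operator: `(∂α)(y₁,…,y_j) = ∑_{x ∈ X} α(x, y₁, …, y_j)`. -/
noncomputable def bdry {X : Type*} [Fintype X] {j : ℕ}
    (α : (Fin (j + 1) → X) → ℝ) : (Fin j → X) → ℝ :=
  fun y => ∑ x : X, α (Fin.cons x y)

/-- The elementary chain `1_t`: value `sign π` on the reordering of `t` by `π`,
and `0` on all other tuples. -/
noncomputable def unitChain {X : Type*} [DecidableEq X] {j : ℕ} (t : Fin j → X) :
    (Fin j → X) → ℝ :=
  fun s => ∑ π : Equiv.Perm (Fin j),
    if s = t ∘ π then ((Equiv.Perm.sign π : ℤ) : ℝ) else 0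

/-- The coboundary operator:
`(δf)(x₁,…,x_{j+2}) = ∑ᵢ (-1)^(i+1) f(x₁,…,x̂ᵢ,…,x_{j+2})` (`0`-indexed sign `(-1)^i`). -/
noncomputable def cobdry {X : Type*} {j : ℕ}
    (f : (Fin (j + 1) → X) → ℝ) : (Fin (j + 2) → X) → ℝ :=
  fun x => ∑ i : Fin (j + 2), (-1 : ℝ) ^ (i : ℕ) * f (x ∘ i.succAbove)

/-- A pseudo metric of arity `K` (a pseudo `K`-metric): nonnegative, vanishing on
non-injective tuples, permutation invariant, satisfying the simplex inequality. -/
structure IsPseudoMetric {X : Type*} (K : ℕ) (d : (Fin K → X) → ℝ) : Prop where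
  nonneg : ∀ x, 0 ≤ d x
  eq_zero : ∀ x, ¬ Function.Injective x → d x = 0
  perm : ∀ (π : Equiv.Perm (Fin K)) (x), d (x ∘ π) = d x
  simplex : ∀ (x : Fin K → X) (y : X),
    d x ≤ ∑ i : Fin K, d (Function.update x i y)

/-- A strong pseudo metric of arity `k + 1` (a strong pseudo `(k+1)`-metric).
The strong simplex inequality `d t ≤ ∑_τ |α(τ)| * d(τ)` (with the sum over
`(k+1)`-element subsets `τ` of `X`, each evaluated on any fixed ordering of `τ`)
is stated in the equivalent form `(k+1)! * d t ≤ ∑_s |α(s)| * d(s)` with the sum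
over all `(k+1)`-tuples `s`: since `α` is alternating and `d` is permutation
invariant, the summand depends only on the underlying set of `s` (it vanishes on
tuples with repeated entries), and each `(k+1)`-element subset has exactly
`(k+1)!` orderings. -/
structure IsStrongPseudoMetric {X : Type*} [Fintype X] [DecidableEq X] (k : ℕ)
    (d : (Fin (k + 1) → X) → ℝ) : Prop where
  nonneg : ∀ x, 0 ≤ d x
  eq_zero : ∀ x, ¬ Function.Injective x → d x = 0
  perm : ∀ (π : Equiv.Perm (Fin (k + 1))) (x), d (x ∘ π) = d x
  strong_simplex : ∀ t : Fin (k + 1) → X, Function.Injective t →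
    ∀ α : (Fin (k + 1) → X) → ℝ, AltChain α → bdry α = bdry (unitChain t) →
      ((k + 1).factorial : ℝ) * d t ≤ ∑ s : Fin (k + 1) → X, |α s| * d s

/-- `(X, d)` is a coboundary metric of arity `k + 2` in `m` dimensions with respect
to the norm `ν` on `ℝ^m`: there are chains `f 1, …, f m` on `(k+1)`-tuples (i.e.
`(k+2)-2`-dimensional chains for arity `k+2`) whose simultaneous coboundary
realizes `d` on injective tuples, and `d` vanishes on non-injective tuples. -/
def IsCoboundaryMetric {X : Type*} (k m : ℕ) (ν : (Fin m → ℝ) → ℝ)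
    (d : (Fin (k + 2) → X) → ℝ) : Prop :=
  ∃ f : Fin m → ((Fin (k + 1) → X) → ℝ),
    (∀ i, AltChain (f i)) ∧
    (∀ x, Function.Injective x → d x = ν (fun i => cobdry (f i) x)) ∧
    (∀ x, ¬ Function.Injective x → d x = 0)

/-- `ν` is a norm on `ℝ^m`. -/
structure IsNorm {m : ℕ} (ν : (Fin m → ℝ) → ℝ) : Prop where
  nonneg : ∀ x, 0 ≤ ν x
  eq_zero_iff : ∀ x, ν x = 0 ↔ x = 0
  homog : ∀ (c : ℝ) (x), ν (c • x) = |c| * ν x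
  triangle : ∀ x y, ν (x + y) ≤ ν x + ν y

/-- The `ℓ_p` norm on `ℝ^m` for real `p`. -/
noncomputable def lpNorm (p : ℝ) {m : ℕ} (x : Fin m → ℝ) : ℝ :=
  (∑ i, |x i| ^ p) ^ (1 / p)

/-- The `ℓ_1` norm on `ℝ^m`. -/
noncomputable def l1Norm {m : ℕ} (x : Fin m → ℝ) : ℝ := ∑ i, |x i|

/-- The `ℓ_2` (Euclidean) norm on `ℝ^m`. -/
noncomputable def l2Norm {m : ℕ} (x : Fin m → ℝ) : ℝ := Real.sqrt (∑ i, x i ^ 2)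

/-- The `ℓ_∞` norm on `ℝ^m` (the sup norm, which is the norm of `Fin m → ℝ`). -/
noncomputable def linfNorm {m : ℕ} (x : Fin m → ℝ) : ℝ := ‖x‖

/- The apex extension of `d` (of arity `K`), with the apex being
`none : Option X` (a new element not in `X`): on an injective `(K+1)`-tuple
containing the apex in position `i` it is `d` of the tuple with position `i`
removed, and it is `0` on all other tuples. -/
open Classical in
noncomputable def apexExt {X : Type*} {K : ℕ} (d : (Fin K → X) → ℝ) :
    (Fin (K + 1) → Option X) → ℝ := fun x =>
  if h : Function.Injective x ∧ ∃ i, x i = none then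
    d (fun j =>
      Option.get (x ((Classical.choose h.2).succAbove j))
        (by
          rw [Option.isSome_iff_ne_none]
          intro hnone
          exact Fin.succAbove_ne (Classical.choose h.2) j
            (h.1 (hnone.trans (Classical.choose_spec h.2).symm))))
  else 0

/-- The `K`-dimensional volume of the simplex with vertices `y 0, …, y K` in `ℝ^m`:
`(1/K!) * √(det (AᵀA))` where `A` is the `m × K` matrix with columns
`y i - y 0`, `i = 1, …, K`. -/
noncomputable def simplexVolume {m K : ℕ} (y : Fin (K + 1) → (Fin m → ℝ)) : ℝ :=
  (1 / (K.factorial : ℝ)) *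
    Real.sqrt
      (Matrix.det
        (Matrix.of fun i j : Fin K =>
          ∑ l : Fin m, (y i.succ l - y 0 l) * (y j.succ l - y 0 l)))

section Aux

open Equiv Equiv.Perm

/-- Cast of a sign squared is one. -/
lemma sgn_mul_self {n : ℕ} (e : Equiv.Perm (Fin n)) :
    ((Equiv.Perm.sign e : ℤ) : ℝ) * ((Equiv.Perm.sign e : ℤ) : ℝ) = 1 := by
  rcases Int.units_eq_one_or (Equiv.Perm.sign e) with h | h <;> rw [h] <;> norm_num

lemma abs_sgn {n : ℕ} (e : Equiv.Perm (Fin n)) :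
    |((Equiv.Perm.sign e : ℤ) : ℝ)| = 1 := by
  rcases Int.units_eq_one_or (Equiv.Perm.sign e) with h | h <;> rw [h] <;> norm_num

/-- An alternating chain vanishes on non-injective tuples. -/
lemma altChain_eq_zero {X : Type*} {j : ℕ} {α : (Fin j → X) → ℝ}
    (hα : AltChain α) {x : Fin j → X} (hx : ¬ Function.Injective x) : α x = 0 := by
  rw [Function.Injective] at hx
  push_neg at hx
  obtain ⟨a, b, hab, hne⟩ := hx
  have h := hα (Equiv.swap a b) x
  have hx' : x ∘ ⇑(Equiv.swap a b) = x := by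
    funext c
    simp only [Function.comp_apply]
    rcases eq_or_ne c a with rfl | hca
    · rw [Equiv.swap_apply_left]; exact hab.symm
    rcases eq_or_ne c b with rfl | hcb
    · rw [Equiv.swap_apply_right]; exact hab
    · rw [Equiv.swap_apply_of_ne_of_ne hca hcb]
  rw [hx', Equiv.Perm.sign_swap hne] at h
  norm_num at h
  linarith

/-- `insertNth` is `cons` composed with `cycleRange`. -/
lemma insertNth_eq_cons_comp {X : Type*} {n : ℕ} (i : Fin (n + 1)) (a : X) (y : Fin n → X) :
    i.insertNth a y = (Fin.cons a y) ∘ ⇑(Fin.cycleRange i) := by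
  funext j
  rcases eq_or_ne j i with rfl | hj
  · simp [Fin.cycleRange_self]
  · obtain ⟨j', rfl⟩ := Fin.exists_succAbove_eq hj
    simp [Fin.cycleRange_succAbove]

/-- The antisymmetrized formula for the coboundary. -/
lemma sum_perm_cobdry {k : ℕ} {X : Type*} {f : (Fin (k + 1) → X) → ℝ} (hf : AltChain f)
    (x : Fin (k + 2) → X) :
    ∑ π : Equiv.Perm (Fin (k + 2)), ((Equiv.Perm.sign π : ℤ) : ℝ) * f (x ∘ ⇑π ∘ Fin.succ)
      = ((k + 1).factorial : ℝ) * cobdry f x := by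
  have hinv0 : ∀ p : Fin (k + 2), (Fin.cycleRange p)⁻¹ 0 = p := by
    intro p
    rw [Equiv.Perm.inv_eq_iff_eq]
    exact (Fin.cycleRange_self p).symm
  set φ : Fin (k + 2) × Equiv.Perm (Fin (k + 1)) → Equiv.Perm (Fin (k + 2)) :=
    fun pe => (Fin.cycleRange pe.1)⁻¹ * Equiv.Perm.decomposeFin.symm (0, pe.2) with hφ
  have happ : ∀ (p : Fin (k + 2)) (e : Equiv.Perm (Fin (k + 1))),
      x ∘ ⇑(φ (p, e)) ∘ Fin.succ = (x ∘ p.succAbove) ∘ ⇑e := by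
    intro p e
    funext i
    simp only [hφ, Function.comp_apply, Equiv.Perm.mul_apply,
      Equiv.Perm.decomposeFin_symm_apply_succ, Equiv.swap_self, Equiv.coe_refl, id_eq]
    congr 1
    rw [Equiv.Perm.inv_eq_iff_eq]
    exact (Fin.cycleRange_succAbove p (e i)).symm
  have hsign : ∀ (p : Fin (k + 2)) (e : Equiv.Perm (Fin (k + 1))),
      ((Equiv.Perm.sign (φ (p, e)) : ℤ) : ℝ)
        = (-1 : ℝ) ^ (p : ℕ) * ((Equiv.Perm.sign e : ℤ) : ℝ) := by
    intro p e
    simp only [hφ, map_mul, Equiv.Perm.sign_inv, Fin.sign_cycleRange,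
      Equiv.Perm.decomposeFin.symm_sign, if_pos rfl, one_mul]
    push_cast
    ring
  have hbij : Function.Bijective φ := by
    rw [Fintype.bijective_iff_injective_and_card]
    constructor
    · rintro ⟨p, e⟩ ⟨q, u⟩ h
      simp only [hφ] at h
      have hp : p = q := by
        have h0 := congrArg (fun π : Equiv.Perm (Fin (k + 2)) => π 0) h
        simpa [Equiv.Perm.mul_apply, hinv0] using h0
      subst hp
      have he := mul_left_cancel h
      have := Equiv.Perm.decomposeFin.symm.injective he
      simp only [Prod.mk.injEq] at this
      exact Prod.ext rfl this.2
    · simp [Fintype.card_perm, Nat.factorial_succ]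
  have := Fintype.sum_bijective φ hbij
    (fun pe : Fin (k + 2) × Equiv.Perm (Fin (k + 1)) =>
      (-1 : ℝ) ^ ((pe.1 : Fin (k + 2)) : ℕ) * f (x ∘ (pe.1).succAbove))
    (fun π : Equiv.Perm (Fin (k + 2)) => ((Equiv.Perm.sign π : ℤ) : ℝ) * f (x ∘ ⇑π ∘ Fin.succ))
    (by
      rintro ⟨p, e⟩
      show (-1 : ℝ) ^ ((p : Fin (k + 2)) : ℕ) * f (x ∘ p.succAbove)
        = ((Equiv.Perm.sign (φ (p, e)) : ℤ) : ℝ) * f (x ∘ ⇑(φ (p, e)) ∘ Fin.succ)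
      rw [hsign, happ, hf e (x ∘ p.succAbove)]
      rw [show (-1 : ℝ) ^ (p : ℕ) * ((Equiv.Perm.sign e : ℤ) : ℝ) *
          (((Equiv.Perm.sign e : ℤ) : ℝ) * f (x ∘ p.succAbove))
          = (-1 : ℝ) ^ (p : ℕ) * f (x ∘ p.succAbove) *
            (((Equiv.Perm.sign e : ℤ) : ℝ) * ((Equiv.Perm.sign e : ℤ) : ℝ)) by ring,
        sgn_mul_self, mul_one])
  rw [← this, Fintype.sum_prod_type]
  unfold cobdry
  rw [Finset.mul_sum]
  apply Finset.sum_congr rfl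
  intro p _
  simp only [Finset.sum_const, Finset.card_univ, Fintype.card_perm, Fintype.card_fin,
    nsmul_eq_mul]

/-- The coboundary of a chain is alternating. -/
lemma altChain_cobdry {k : ℕ} {X : Type*} {f : (Fin (k + 1) → X) → ℝ} (hf : AltChain f) :
    AltChain (cobdry f) := by
  intro σ x
  have hfac : ((k + 1).factorial : ℝ) ≠ 0 := Nat.cast_ne_zero.mpr (Nat.factorial_ne_zero _)
  apply mul_left_cancel₀ hfac
  rw [← sum_perm_cobdry hf (x ∘ ⇑σ),
    show ((k + 1).factorial : ℝ) * (((Equiv.Perm.sign σ : ℤ) : ℝ) * cobdry f x)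
      = ((Equiv.Perm.sign σ : ℤ) : ℝ) * (((k + 1).factorial : ℝ) * cobdry f x) by ring,
    ← sum_perm_cobdry hf x, Finset.mul_sum]
  apply Fintype.sum_bijective (fun π => σ * π) (Group.mulLeft_bijective σ)
  intro π
  rw [show (x ∘ ⇑σ) ∘ ⇑π ∘ Fin.succ = x ∘ ⇑(σ * π) ∘ Fin.succ by
      rw [Equiv.Perm.coe_mul]; rfl,
    map_mul]
  rcases Int.units_eq_one_or (Equiv.Perm.sign σ) with h | h <;> rw [h] <;> push_cast <;> ring

/-- Summation by parts: pairing an alternating chain with a coboundary. -/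
lemma pairing {k : ℕ} {X : Type*} [Fintype X]
    (α : (Fin (k + 2) → X) → ℝ) (hα : AltChain α) (f : (Fin (k + 1) → X) → ℝ) :
    ∑ s : Fin (k + 2) → X, α s * cobdry f s
      = ((k + 2 : ℕ) : ℝ) * ∑ y : Fin (k + 1) → X, bdry α y * f y := by
  unfold cobdry
  simp_rw [Finset.mul_sum]
  rw [Finset.sum_comm]
  have hi : ∀ i : Fin (k + 2),
      ∑ s : Fin (k + 2) → X, α s * ((-1 : ℝ) ^ (i : ℕ) * f (s ∘ i.succAbove))
        = ∑ y : Fin (k + 1) → X, bdry α y * f y := by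
    intro i
    rw [← Equiv.sum_comp (Fin.insertNthEquiv (fun _ => X) i)
      (fun s => α s * ((-1 : ℝ) ^ (i : ℕ) * f (s ∘ i.succAbove)))]
    rw [Fintype.sum_prod_type]
    unfold bdry
    rw [Finset.sum_comm]
    apply Finset.sum_congr rfl
    intro y _
    rw [Finset.sum_mul]
    apply Finset.sum_congr rfl
    intro a _
    have h1 : (Fin.insertNthEquiv (fun _ => X) i) (a, y) = i.insertNth a y := rfl
    have h2 : (i.insertNth a y) ∘ i.succAbove = y := by
      funext j; simp
    have h3 : α (i.insertNth a y) = (-1 : ℝ) ^ (i : ℕ) * α (Fin.cons a y) := by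
      rw [insertNth_eq_cons_comp, hα (Fin.cycleRange i) (Fin.cons a y), Fin.sign_cycleRange]
      push_cast
      ring
    rw [h1, h2, h3]
    rw [show (-1 : ℝ) ^ (i : ℕ) * α (Fin.cons a y) * ((-1 : ℝ) ^ (i : ℕ) * f y)
        = ((-1 : ℝ) ^ (i : ℕ) * (-1 : ℝ) ^ (i : ℕ)) * (α (Fin.cons a y) * f y) by ring,
      ← pow_add, Even.neg_one_pow ⟨(i : ℕ), rfl⟩, one_mul]
  rw [Finset.sum_congr rfl fun i _ => hi i, Finset.sum_const, Finset.card_univ,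
    Fintype.card_fin, nsmul_eq_mul, Finset.mul_sum]

/-- The elementary chain is alternating. -/
lemma altChain_unitChain {X : Type*} [DecidableEq X] {j : ℕ} (t : Fin j → X) :
    AltChain (unitChain t) := by
  intro σ x
  unfold unitChain
  rw [Finset.mul_sum]
  apply Fintype.sum_bijective (fun π => π * σ⁻¹) (Group.mulRight_bijective σ⁻¹)
  intro π
  have hiff : x ∘ ⇑σ = t ∘ ⇑π ↔ x = t ∘ ⇑(π * σ⁻¹) := by
    constructor
    · intro h
      funext u
      have := congrFun h (σ⁻¹ u)
      simpa [Equiv.Perm.mul_apply] using this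
    · intro h
      funext u
      have := congrFun h (σ u)
      simpa [Equiv.Perm.mul_apply] using this
  by_cases h : x ∘ ⇑σ = t ∘ ⇑π
  · rw [if_pos h, if_pos (hiff.mp h), map_mul, Equiv.Perm.sign_inv]
    push_cast
    rw [show ((Equiv.Perm.sign σ : ℤ) : ℝ) * (((Equiv.Perm.sign π : ℤ) : ℝ) *
        ((Equiv.Perm.sign σ : ℤ) : ℝ))
        = ((Equiv.Perm.sign σ : ℤ) : ℝ) * ((Equiv.Perm.sign σ : ℤ) : ℝ) *
          ((Equiv.Perm.sign π : ℤ) : ℝ) by ring, sgn_mul_self, one_mul]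
  · rw [if_neg h, if_neg (fun hc => h (hiff.mpr hc)), mul_zero]

/-- Pairing a chain with the elementary chain extracts its value. -/
lemma unitChain_pairing {X : Type*} [Fintype X] [DecidableEq X] {j : ℕ}
    (t : Fin j → X) (g : (Fin j → X) → ℝ) (hg : AltChain g) :
    ∑ s : Fin j → X, unitChain t s * g s = (j.factorial : ℝ) * g t := by
  unfold unitChain
  simp_rw [Finset.sum_mul]
  rw [Finset.sum_comm]
  have hπ : ∀ π : Equiv.Perm (Fin j),
      ∑ s : Fin j → X, (if s = t ∘ ⇑π then ((Equiv.Perm.sign π : ℤ) : ℝ) else 0) * g s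
        = g t := by
    intro π
    rw [Finset.sum_eq_single (t ∘ ⇑π)]
    · rw [if_pos rfl, hg π t]
      rw [show ((Equiv.Perm.sign π : ℤ) : ℝ) * (((Equiv.Perm.sign π : ℤ) : ℝ) * g t)
          = ((Equiv.Perm.sign π : ℤ) : ℝ) * ((Equiv.Perm.sign π : ℤ) : ℝ) * g t by ring,
        sgn_mul_self, one_mul]
    · intro s _ hs
      rw [if_neg hs, zero_mul]
    · intro h
      exact absurd (Finset.mem_univ _) h
  rw [Finset.sum_congr rfl fun π _ => hπ π, Finset.sum_const, Finset.card_univ,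
    Fintype.card_perm, Fintype.card_fin, nsmul_eq_mul]

/-- A norm is subadditive over finite sums. -/
lemma isNorm_sum_le {m : ℕ} {ν : (Fin m → ℝ) → ℝ} (hν : IsNorm ν)
    {ι : Type*} (s : Finset ι) (v : ι → (Fin m → ℝ)) :
    ν (∑ i ∈ s, v i) ≤ ∑ i ∈ s, ν (v i) := by
  classical
  induction s using Finset.induction_on with
  | empty => simp [(hν.eq_zero_iff 0).mpr rfl]
  | insert _ _ hnotmem ih =>
    rw [Finset.sum_insert hnotmem, Finset.sum_insert hnotmem]
    exact le_trans (hν.triangle _ _) (by linarith)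

end Aux

/-- for every `k ≥ 2` (arity `k + 2`), every `m ≥ 1`, and every norm
`ν` on `ℝ^m`, a coboundary metric in `m` dimensions w.r.t. `ν` is a strong pseudo
metric. -/
theorem stmt_3 (k m : ℕ) (hm : 1 ≤ m) (ν : (Fin m → ℝ) → ℝ) (hν : IsNorm ν)
    {X : Type*} [Fintype X] [DecidableEq X] (d : (Fin (k + 2) → X) → ℝ)
    (hd : IsCoboundaryMetric k m ν d) :
    IsStrongPseudoMetric (k + 1) d := by
  obtain ⟨f, hfalt, hdinj, hdnin⟩ := hd
  set g : (Fin (k + 2) → X) → (Fin m → ℝ) := fun x i => cobdry (f i) x with hg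
  have hgalt : ∀ i, AltChain (cobdry (f i)) := fun i => altChain_cobdry (hfalt i)
  have hdν : ∀ x, d x = ν (g x) := by
    intro x
    by_cases hx : Function.Injective x
    · exact hdinj x hx
    · rw [hdnin x hx]
      have h0 : g x = 0 := funext fun i => altChain_eq_zero (hgalt i) hx
      rw [h0, (hν.eq_zero_iff 0).mpr rfl]
  refine ⟨?_, ?_, ?_, ?_⟩
  · intro x
    rw [hdν]
    exact hν.nonneg _
  · exact hdnin
  · intro π x
    rw [hdν, hdν]
    have hgp : g (x ∘ ⇑π) = ((Equiv.Perm.sign π : ℤ) : ℝ) • g x :=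
      funext fun i => hgalt i π x
    rw [hgp, hν.homog, abs_sgn, one_mul]
  · intro t ht α hα hb
    have hkey : ∀ i : Fin m,
        ∑ s : Fin (k + 2) → X, α s * cobdry (f i) s
          = ((k + 2).factorial : ℝ) * cobdry (f i) t := by
      intro i
      calc ∑ s : Fin (k + 2) → X, α s * cobdry (f i) s
          = ((k + 2 : ℕ) : ℝ) * ∑ y : Fin (k + 1) → X, bdry α y * f i y :=
            pairing α hα (f i)
        _ = ((k + 2 : ℕ) : ℝ) * ∑ y : Fin (k + 1) → X, bdry (unitChain t) y * f i y := by
            rw [hb]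
        _ = ∑ s : Fin (k + 2) → X, unitChain t s * cobdry (f i) s :=
            (pairing (unitChain t) (altChain_unitChain t) (f i)).symm
        _ = ((k + 2).factorial : ℝ) * cobdry (f i) t :=
            unitChain_pairing t (cobdry (f i)) (hgalt i)
    have hvec : ∑ s : Fin (k + 2) → X, α s • g s = ((k + 2).factorial : ℝ) • g t := by
      funext i
      rw [Finset.sum_apply]
      simp only [Pi.smul_apply, smul_eq_mul]
      exact hkey i
    calc (((k + 1) + 1).factorial : ℝ) * d t
        = ν (((k + 2).factorial : ℝ) • g t) := by
          rw [hν.homog, abs_of_nonneg (by positivity), hdν t]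
      _ = ν (∑ s : Fin (k + 2) → X, α s • g s) := by rw [hvec]
      _ ≤ ∑ s : Fin (k + 2) → X, ν (α s • g s) := isNorm_sum_le hν _ _
      _ = ∑ s : Fin (k + 2) → X, |α s| * d s := by
          refine Finset.sum_congr rfl fun s _ => ?_
          rw [hν.homog, hdν s]
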